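/- If G is a cycle of order n ≥ 4, then mvd(G) = ⌊n/2⌋. -/

import Mathlib

open SimpleGraph

variable {V : Type*}

/-- `S` is a set of vertices (not containing `x` or `y`) whose removal separates `x` from `y`:
every walk from `x` to `y` meets `S`. -/
def IsSepSet (G : SimpleGraph V) (S : Set V) (x y : V) : Prop :=
  x ∉ S ∧ y ∉ S ∧ ∀ p : G.Walk x y, ∃ v ∈ p.support, v ∈ S

/-- `τ` is an MVD-coloring of `G`: every pair of distinct nonadjacent vertices is
separated by a monochromatic vertex cut. -/
def IsMVDColoring (G : SimpleGraph V) (τ : V → ℕ) : Prop :=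
  ∀ x y : V, x ≠ y → ¬ G.Adj x y →
    ∃ S : Set V, IsSepSet G S x y ∧ ∀ u ∈ S, ∀ w ∈ S, τ u = τ w

/-- The monochromatic vertex-disconnection number: the maximum number of colors
used by an MVD-coloring of `G`. -/
noncomputable def mvd (G : SimpleGraph V) : ℕ :=
  sSup {k | ∃ τ : V → ℕ, IsMVDColoring G τ ∧ (Set.range τ).ncard = k}

namespace MvdCycleAux

open Fin.CommRing Fin.NatCast

lemma mod2 (A m : ℕ) (h : A < 2*m) :
    (A < m ∧ A % m = A) ∨ (m ≤ A ∧ A % m = A - m) := by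
  rcases Nat.lt_or_ge A m with h1 | h1
  · exact Or.inl ⟨h1, Nat.mod_eq_of_lt h1⟩
  · exact Or.inr ⟨h1, by rw [Nat.mod_eq_sub_mod h1, Nat.mod_eq_of_lt (by omega)]⟩

variable {n : ℕ}

lemma val_sub (a b : Fin n) : (a - b).val = (n - b.val + a.val) % n := by rw [Fin.sub_def]

lemma val_add (a b : Fin n) : (a + b).val = (a.val + b.val) % n := by rw [Fin.add_def]

lemma val_neg (a : Fin n) : (-a).val = (n - a.val) % n := by rw [Fin.neg_def]

lemma val_one [NeZero n] (hn : 2 ≤ n) : ((1 : Fin n)).val = 1 := by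
  rw [show ((1 : Fin n)).val = 1 % n from rfl, Nat.mod_eq_of_lt (by omega)]

lemma val_two [NeZero n] (hn : 3 ≤ n) : ((2 : Fin n)).val = 2 := by
  rw [show ((2 : Fin n)).val = 2 % n from rfl, Nat.mod_eq_of_lt (by omega)]

lemma val_zero' [NeZero n] : ((0 : Fin n)).val = 0 := rfl

lemma walk_const {G : SimpleGraph V} {S : Set V} (f : V → Bool)
    (hedge : ∀ u v, G.Adj u v → u ∉ S → v ∉ S → f u = f v) :
    ∀ {a b : V} (p : G.Walk a b), (∀ v ∈ p.support, v ∉ S) → f a = f b := by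
  intro a b p
  induction p with
  | nil => intro _; rfl
  | @cons a c b h p ih =>
    intro hs
    have ha : a ∉ S := hs _ (by simp)
    have hc : c ∉ S := hs _ (by simp [Walk.start_mem_support])
    exact (hedge _ _ h ha hc).trans (ih fun v hv => hs v (by simp [hv]))

lemma isSepSet_of_bool {G : SimpleGraph V} {S : Set V} {x y : V} (f : V → Bool)
    (hx : x ∉ S) (hy : y ∉ S) (hxy : f x ≠ f y)
    (hedge : ∀ u v, G.Adj u v → u ∉ S → v ∉ S → f u = f v) : IsSepSet G S x y := by
  refine ⟨hx, hy, fun p => ?_⟩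
  by_contra h
  push_neg at h
  exact hxy (walk_const f hedge p h)

lemma sep_symm {G : SimpleGraph V} {S : Set V} {x y : V}
    (h : IsSepSet G S x y) : IsSepSet G S y x :=
  ⟨h.2.1, h.1, fun p => by
    obtain ⟨v, hv, hvS⟩ := h.2.2 p.reverse
    exact ⟨v, by simpa [Walk.support_reverse] using hv, hvS⟩⟩

lemma adj_succ [NeZero n] (hn : 2 ≤ n) (a : Fin n) : (cycleGraph n).Adj a (a + 1) := by
  rw [cycleGraph_adj']
  right
  rw [show a + 1 - a = (1 : Fin n) by ring, val_one hn]

/-- Walk along the cycle from `a` to `a + k`. -/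
def cwalk [NeZero n] (hn : 2 ≤ n) (a : Fin n) : (k : ℕ) → (cycleGraph n).Walk a (a + (k : Fin n))
  | 0 => Walk.nil.copy rfl (by simp)
  | (k+1) => (Walk.cons (adj_succ hn a) (cwalk hn (a+1) k)).copy rfl (by push_cast; ring)

lemma cwalk_support [NeZero n] (hn : 2 ≤ n) (a : Fin n) (k : ℕ) :
    ∀ v ∈ (cwalk hn a k).support, ∃ j ≤ k, v = a + (j : Fin n) := by
  induction k generalizing a with
  | zero =>
    intro v hv
    simp only [cwalk, Walk.support_copy, Walk.support_nil, List.mem_singleton] at hv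
    exact ⟨0, le_refl 0, by simp [hv]⟩
  | succ k ih =>
    intro v hv
    simp only [cwalk, Walk.support_copy, Walk.support_cons, List.mem_cons] at hv
    rcases hv with hv | hv
    · exact ⟨0, by omega, by simp [hv]⟩
    · obtain ⟨j, hj, hvj⟩ := ih (a + 1) v hv
      refine ⟨j + 1, by omega, ?_⟩
      rw [hvj]; push_cast; ring

lemma sep_lemma (hn : 4 ≤ n) [NeZero n] (τ : Fin n → ℕ)
    (hpartner : ∀ v : Fin n, ∃ w, τ w = τ v ∧ ((w - v).val = n/2 ∨ (v - w).val = n/2))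
    {x y : Fin n} (hd2 : 2 ≤ (y - x).val) (hdm : (y - x).val ≤ n/2) :
    ∃ S : Set (Fin n), IsSepSet (cycleGraph n) S x y ∧ ∀ u ∈ S, ∀ w ∈ S, τ u = τ w := by
  have hd_lt : (y - x).val < n := (y - x).isLt
  obtain ⟨w, hτw, hw⟩ := hpartner (x + 1)
  have hv_rel : ((x + 1) - x).val = 1 := by
    rw [show x + 1 - x = (1 : Fin n) by ring, val_one (by omega)]
  have hr_cases : (w - x).val = n/2 + 1 ∨ (w - x).val = n - n/2 + 1 := by
    rcases hw with hw | hw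
    · left
      have h2 : (w - x).val = ((w - (x+1)).val + ((x+1) - x).val) % n := by
        rw [show w - x = (w - (x+1)) + ((x+1) - x) by ring, val_add]
      rw [hw, hv_rel] at h2
      rcases mod2 (n/2 + 1) n (by omega) with ⟨h3, h4⟩ | ⟨h3, h4⟩ <;> omega
    · right
      have h2 : (w - x).val = (n - ((x+1) - w).val + ((x+1) - x).val) % n := by
        rw [show w - x = ((x+1) - x) - ((x+1) - w) by ring, val_sub]
      rw [hw, hv_rel] at h2
      rcases mod2 (n - n/2 + 1) n (by omega) with ⟨h3, h4⟩ | ⟨h3, h4⟩ <;> omega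
  have hr_lb : (y - x).val + 1 ≤ (w - x).val := by rcases hr_cases with h | h <;> omega
  have hr_ub : (w - x).val ≤ n - 1 := by rcases hr_cases with h | h <;> omega
  have hx0 : (x - x).val = 0 := by rw [sub_self, val_zero']
  have hmem : ∀ u : Fin n, u ∈ ({x + 1, w} : Set (Fin n)) ↔
      ((u - x).val = 1 ∨ (u - x).val = (w - x).val) := by
    intro u
    simp only [Set.mem_insert_iff, Set.mem_singleton_iff]
    constructor
    · rintro (rfl | rfl)
      · exact Or.inl hv_rel
      · exact Or.inr rfl
    · rintro (h | h)
      · exact Or.inl (sub_left_inj.mp (Fin.ext (by rw [h, hv_rel])))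
      · exact Or.inr (sub_left_inj.mp (Fin.ext h))
  refine ⟨{x + 1, w}, isSepSet_of_bool
      (fun u => decide (2 ≤ (u - x).val ∧ (u - x).val < (w - x).val)) ?_ ?_ ?_ ?_, ?_⟩
  · rw [hmem]
    push_neg
    omega
  · rw [hmem]
    push_neg
    omega
  · have hfx : (decide (2 ≤ (x - x).val ∧ (x - x).val < (w - x).val)) = false := by
      simp only [decide_eq_false_iff_not]
      omega
    have hfy : (decide (2 ≤ (y - x).val ∧ (y - x).val < (w - x).val)) = true := by
      simp only [decide_eq_true_iff]
      exact ⟨hd2, by omega⟩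
    simp only [hfx, hfy]
    simp
  · -- edges preserve f outside S
    intro u₁ u₂ hadj h1 h2
    rw [hmem] at h1 h2
    push_neg at h1 h2
    rw [cycleGraph_adj'] at hadj
    rw [decide_eq_decide]
    have he₁ : (u₁ - x).val < n := (u₁ - x).isLt
    have he₂ : (u₂ - x).val < n := (u₂ - x).isLt
    rcases hadj with hadj | hadj
    · have h4 : (u₁ - x).val = ((u₁ - u₂).val + (u₂ - x).val) % n := by
        rw [show u₁ - x = (u₁ - u₂) + (u₂ - x) by ring, val_add]
      rw [hadj] at h4
      rcases mod2 (1 + (u₂ - x).val) n (by omega) with ⟨h5, h6⟩ | ⟨h5, h6⟩ <;> omega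
    · have h4 : (u₂ - x).val = ((u₂ - u₁).val + (u₁ - x).val) % n := by
        rw [show u₂ - x = (u₂ - u₁) + (u₁ - x) by ring, val_add]
      rw [hadj] at h4
      rcases mod2 (1 + (u₁ - x).val) n (by omega) with ⟨h5, h6⟩ | ⟨h5, h6⟩ <;> omega
  · -- monochromatic
    intro a ha b hb
    simp only [Set.mem_insert_iff, Set.mem_singleton_iff] at ha hb
    rcases ha with rfl | rfl <;> rcases hb with rfl | rfl <;> simp [hτw]

lemma partner (hn : 4 ≤ n) [NeZero n] (v : Fin n) :
    ∃ w : Fin n, w.val % (n/2) = v.val % (n/2) ∧ ((w - v).val = n/2 ∨ (v - w).val = n/2) := by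
  have hv := v.isLt
  have hm : n/2 % n = n/2 := Nat.mod_eq_of_lt (by omega)
  by_cases h : v.val + n/2 < n
  · refine ⟨v + ((n/2 : ℕ) : Fin n), ?_, Or.inl ?_⟩
    · have hval : (v + ((n/2 : ℕ) : Fin n)).val = v.val + n/2 := by
        rw [val_add, Fin.val_natCast, hm, Nat.mod_eq_of_lt h]
      rw [hval, Nat.add_mod_right]
    · rw [show (v + ((n/2 : ℕ) : Fin n)) - v = ((n/2 : ℕ) : Fin n) by ring,
        Fin.val_natCast, hm]
  · refine ⟨v - ((n/2 : ℕ) : Fin n), ?_, Or.inr ?_⟩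
    · have hval : (v - ((n/2 : ℕ) : Fin n)).val = v.val - n/2 := by
        rw [val_sub, Fin.val_natCast, hm]
        rcases mod2 (n - n/2 + v.val) n (by omega) with ⟨h1, h2⟩ | ⟨h1, h2⟩ <;> omega
      rw [hval]
      have h2 : v.val - n/2 + n/2 = v.val := by omega
      conv_rhs => rw [← h2]
      rw [Nat.add_mod_right]
    · rw [show v - (v - ((n/2 : ℕ) : Fin n)) = ((n/2 : ℕ) : Fin n) by ring,
        Fin.val_natCast, hm]

lemma lower_coloring (hn : 4 ≤ n) [NeZero n] :
    IsMVDColoring (cycleGraph n) (fun i : Fin n => i.val % (n/2)) := by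
  intro x y hne hadj
  have hd_lt : (y - x).val < n := (y - x).isLt
  have hd_lt' : (x - y).val < n := (x - y).isLt
  have hd0 : (y - x).val ≠ 0 := by
    intro h0
    exact hne (sub_eq_zero.mp (Fin.ext (h0.trans (val_zero' (n := n)).symm))).symm
  have hd1 : (y - x).val ≠ 1 := fun h1 =>
    hadj (by rw [cycleGraph_adj']; right; exact h1)
  have hdual : (x - y).val = n - (y - x).val := by
    have h1 : ((y - x).val + (x - y).val) % n = 0 := by
      rw [← val_add, show (y - x) + (x - y) = 0 by ring, val_zero']
    rcases mod2 ((y - x).val + (x - y).val) n (by omega) with ⟨h2, h3⟩ | ⟨h2, h3⟩ <;> omega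
  have hd1' : (y - x).val ≠ n - 1 := by
    intro h1
    exact hadj (by rw [cycleGraph_adj']; left; rw [hdual, h1]; omega)
  by_cases hc : (y - x).val ≤ n / 2
  · exact sep_lemma hn _ (fun v => by simpa using partner hn v) (by omega) hc
  · obtain ⟨S, hsep, hmono⟩ := sep_lemma hn (fun i : Fin n => i.val % (n/2))
      (fun v => by simpa using partner hn v)
      (x := y) (y := x) (by rw [hdual]; omega) (by rw [hdual]; omega)
    exact ⟨S, sep_symm hsep, hmono⟩

lemma lower_count (hn : 4 ≤ n) :
    (Set.range (fun i : Fin n => i.val % (n/2))).ncard = n / 2 := by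
  have h : Set.range (fun i : Fin n => i.val % (n/2)) = ↑(Finset.range (n/2)) := by
    ext c
    simp only [Set.mem_range, Finset.coe_range, Set.mem_Iio]
    constructor
    · rintro ⟨i, rfl⟩
      exact Nat.mod_lt _ (by omega)
    · intro hc
      exact ⟨⟨c, by omega⟩, Nat.mod_eq_of_lt hc⟩
  rw [h, Set.ncard_coe_finset, Finset.card_range]

lemma upper (hn : 4 ≤ n) (τ : Fin n → ℕ) (h : IsMVDColoring (cycleGraph n) τ) :
    (Set.range τ).ncard ≤ n / 2 := by
  haveI : NeZero n := ⟨by omega⟩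
  by_contra hk
  push_neg at hk
  have hrange : (Set.range τ).ncard = (Finset.image τ Finset.univ).card := by
    rw [show Set.range τ = ↑(Finset.image τ Finset.univ) by simp]
    exact Set.ncard_coe_finset _
  rw [hrange] at hk
  have hsum : ∑ c ∈ Finset.image τ Finset.univ,
      (Finset.univ.filter (fun i => τ i = c)).card = n := by
    rw [← Finset.card_eq_sum_card_fiberwise
      (fun x _ => Finset.mem_image_of_mem τ (Finset.mem_univ x))]
    simp
  have hsing : ∃ c ∈ Finset.image τ Finset.univ,
      (Finset.univ.filter (fun i => τ i = c)).card = 1 := by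
    by_contra hno
    push_neg at hno
    have h2 : ∀ c ∈ Finset.image τ Finset.univ,
        2 ≤ (Finset.univ.filter (fun i => τ i = c)).card := by
      intro c hc
      obtain ⟨i, _, hi⟩ := Finset.mem_image.mp hc
      have h1 : 1 ≤ (Finset.univ.filter (fun i => τ i = c)).card :=
        Finset.card_pos.mpr ⟨i, by simp [hi]⟩
      have := hno c hc
      omega
    have h3 : 2 * (Finset.image τ Finset.univ).card ≤ ∑ c ∈ Finset.image τ Finset.univ,
        (Finset.univ.filter (fun i => τ i = c)).card := by
      calc 2 * (Finset.image τ Finset.univ).card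
          = ∑ _c ∈ Finset.image τ Finset.univ, 2 := by rw [Finset.sum_const]; ring
        _ ≤ _ := Finset.sum_le_sum h2
    omega
  obtain ⟨c, hcT, hone⟩ := hsing
  obtain ⟨u, hu⟩ := Finset.card_eq_one.mp hone
  have huc : τ u = c := by
    have : u ∈ Finset.univ.filter (fun i => τ i = c) := by rw [hu]; simp
    simpa using this
  have huniq : ∀ z : Fin n, τ z = c → z = u := by
    intro z hz
    have : z ∈ Finset.univ.filter (fun i => τ i = c) := by simp [hz]
    rw [hu] at this
    simpa using this
  have hu_lt := u.isLt
  have h1v : ((1 : Fin n)).val = 1 := val_one (by omega)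
  have h2v : ((2 : Fin n)).val = 2 := val_two (by omega)
  have hne : u - 1 ≠ u + 1 := by
    intro he
    have h0 : (u + 1) - (u - 1) = (2 : Fin n) := by ring
    rw [← he, sub_self] at h0
    have h5 : (0 : ℕ) = 2 := by
      rw [← val_zero' (n := n), ← h2v, h0]
    omega
  have hnadj : ¬ (cycleGraph n).Adj (u - 1) (u + 1) := by
    rw [cycleGraph_adj']
    push_neg
    constructor
    · rw [show (u - 1) - (u + 1) = -(2 : Fin n) by ring, val_neg, h2v,
        Nat.mod_eq_of_lt (by omega)]
      omega
    · rw [show (u + 1) - (u - 1) = (2 : Fin n) by ring, h2v]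
      omega
  obtain ⟨S, ⟨hxS, hyS, hwalks⟩, hmono⟩ := h (u - 1) (u + 1) hne hnadj
  have hadj1 : (cycleGraph n).Adj (u - 1) u := by
    have := adj_succ (n := n) (by omega) (u - 1)
    rwa [show u - 1 + 1 = u by ring] at this
  have hadj2 : (cycleGraph n).Adj u (u + 1) := adj_succ (by omega) u
  have huS : u ∈ S := by
    obtain ⟨z, hz, hzS⟩ := hwalks (Walk.cons hadj1 (Walk.cons hadj2 Walk.nil))
    simp only [Walk.support_cons, Walk.support_nil, List.mem_cons,
      List.mem_singleton, List.not_mem_nil, or_false] at hz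
    rcases hz with rfl | rfl | rfl
    · exact absurd hzS hxS
    · exact hzS
    · exact absurd hzS hyS
  have hend : (u + 1) + ((n - 2 : ℕ) : Fin n) = u - 1 := by
    apply Fin.ext
    rw [val_add, val_add, val_sub, Fin.val_natCast, h1v,
      Nat.mod_eq_of_lt (show n - 2 < n by omega)]
    rcases mod2 (u.val + 1) n (by omega) with ⟨hA1, hA2⟩ | ⟨hA1, hA2⟩ <;>
      rcases mod2 ((u.val + 1) % n + (n - 2)) n (by omega) with ⟨hB1, hB2⟩ | ⟨hB1, hB2⟩ <;>
      rcases mod2 (n - 1 + u.val) n (by omega) with ⟨hC1, hC2⟩ | ⟨hC1, hC2⟩ <;> omega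
  obtain ⟨z, hz, hzS⟩ := hwalks ((cwalk (by omega) (u + 1) (n - 2)).copy rfl hend).reverse
  rw [Walk.support_reverse, List.mem_reverse, Walk.support_copy] at hz
  obtain ⟨j, hj, rfl⟩ := cwalk_support (by omega) (u + 1) (n - 2) z hz
  have hzne : (u + 1) + (j : Fin n) ≠ u := by
    intro he
    have heq := congrArg Fin.val he
    rw [val_add, val_add, Fin.val_natCast, h1v,
      Nat.mod_eq_of_lt (show j < n by omega)] at heq
    rcases mod2 (u.val + 1) n (by omega) with ⟨hA1, hA2⟩ | ⟨hA1, hA2⟩ <;>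
      rcases mod2 ((u.val + 1) % n + j) n (by omega) with ⟨hB1, hB2⟩ | ⟨hB1, hB2⟩ <;> omega
  exact hzne (huniq _ ((hmono _ hzS _ huS).trans huc))

end MvdCycleAux

theorem mvd_cycle (n : ℕ) (hn : 4 ≤ n) : mvd (cycleGraph n) = n / 2 := by
  haveI : NeZero n := ⟨by omega⟩
  have hmem : n / 2 ∈ {k | ∃ τ : Fin n → ℕ,
      IsMVDColoring (cycleGraph n) τ ∧ (Set.range τ).ncard = k} :=
    ⟨fun i : Fin n => i.val % (n/2), MvdCycleAux.lower_coloring hn, MvdCycleAux.lower_count hn⟩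
  have hub : ∀ k ∈ {k | ∃ τ : Fin n → ℕ,
      IsMVDColoring (cycleGraph n) τ ∧ (Set.range τ).ncard = k}, k ≤ n / 2 := by
    rintro k ⟨τ, hτ, rfl⟩
    exact MvdCycleAux.upper hn τ hτ
  exact le_antisymm (csSup_le ⟨_, hmem⟩ hub) (le_csSup ⟨n / 2, hub⟩ hmem)
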